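/- If b0·b1 is a factor of length 2 of the sequence π(w) (i.e., b0 = π(w[n]) and b1 = π(w[n+1]) for some n ≥ 0), then b0 joins with b1 with respect to (φ0, φ1): writing b0 = (v0, v1, s) and b1 = (w0, w1, t), one has |φ0(v0)| − s − |φ1(v1)| + t = 0. -/

import Mathlib

/-- The alphabet `A = {a, b, c}`. -/
inductive A : Type
  | a | b | c
deriving DecidableEq, Repr

/-- The substitution `φ0 : a ↦ abc, b ↦ a, c ↦ ac`. -/
def phi0 : A → List A
  | A.a => [A.a, A.b, A.c]
  | A.b => [A.a]
  | A.c => [A.a, A.c]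

/-- The substitution `φ1 : a ↦ cba, b ↦ a, c ↦ ca`. -/
def phi1 : A → List A
  | A.a => [A.c, A.b, A.a]
  | A.b => [A.a]
  | A.c => [A.c, A.a]

/-- The action of a morphism (given by its values on letters) on finite words. -/
def applyMorphism {α β : Type*} (φ : α → List β) (l : List α) : List β :=
  l.flatMap φ

/-- The prefix `u[:n]` of length `n` of an infinite word `u`. -/
def pref {α : Type*} (u : ℕ → α) (n : ℕ) : List α :=
  (List.range n).map u

/-- A finite word `l` is a prefix of the infinite word `u`. -/
def PrefixOfSeq {α : Type*} (l : List α) (u : ℕ → α) : Prop :=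
  ∀ i : ℕ, ∀ h : i < l.length, l.get ⟨i, h⟩ = u i

/-- The infinite word `u` is a (one-sided) fixed point of the substitution `φ`,
i.e. `φ(u) = u`: the image of every prefix of `u` is again a prefix of `u`. -/
def IsFixedPointOf {α : Type*} (φ : α → List α) (u : ℕ → α) : Prop :=
  ∀ n : ℕ, PrefixOfSeq (applyMorphism φ (pref u n)) u

/-- A brick over the alphabet `A`: an element of `A × A × ℤ`. -/
abbrev Brick : Type := A × A × ℤ

/-- The substitution `μ` over `C = {0, 1, …, 8}`. -/
def mu : Fin 9 → List (Fin 9)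
  | 0 => [0, 1]
  | 1 => [2, 3]
  | 2 => [4, 5]
  | 3 => [4, 1]
  | 4 => [2, 3, 1]
  | 5 => [2, 6]
  | 6 => [4, 7, 8]
  | 7 => [2]
  | 8 => [6, 6]

/-- The morphism `π : C → B(A)` sending each letter of `C` to a brick. -/
def piB : Fin 9 → Brick
  | 0 => (A.a, A.c, 0)
  | 1 => (A.b, A.a, -1)
  | 2 => (A.c, A.c, 1)
  | 3 => (A.a, A.b, 1)
  | 4 => (A.a, A.a, -1)
  | 5 => (A.c, A.c, -1)
  | 6 => (A.a, A.a, 1)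
  | 7 => (A.b, A.c, -1)
  | 8 => (A.c, A.b, 0)

/-- The brick `(v0, v1, s)` joins with the brick `(w0, w1, t)` with respect to
`(φ0, φ1)` if `|φ0(v0)| − s − |φ1(v1)| + t = 0`. -/
def Joins (b0 b1 : Brick) : Prop :=
  ((phi0 b0.1).length : ℤ) - b0.2.2 - ((phi1 b0.2.1).length : ℤ) + b1.2.2 = 0

/-- The closure of the set of length-2 factors of `w`. -/
def goodPairs : List (Fin 9 × Fin 9) :=
  [(0,1),(1,2),(2,3),(2,6),(3,1),(3,4),(4,1),(4,5),(4,7),(5,4),(6,2),(6,6),(7,8),(8,4)]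

def Good (c d : Fin 9) : Prop := (c, d) ∈ goodPairs

instance : ∀ c d : Fin 9, Decidable (Good c d) := fun c d =>
  inferInstanceAs (Decidable ((c, d) ∈ goodPairs))

lemma good_mu : ∀ c : Fin 9, List.IsChain Good (mu c) := by
  intro c
  fin_cases c <;>
    simp only [mu, List.isChain_cons_cons, List.isChain_singleton, and_true] <;> decide

lemma mu_ne_nil : ∀ c : Fin 9, mu c ≠ [] := by decide

lemma good_boundary : ∀ c d : Fin 9, Good c d →
    ∀ x ∈ (mu c).getLast?, ∀ y ∈ (mu d).head?, Good x y := by decide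

instance : ∀ b0 b1 : Brick, Decidable (Joins b0 b1) := fun b0 b1 =>
  inferInstanceAs (Decidable (_ = _))

lemma good_joins : ∀ c d : Fin 9, Good c d → Joins (piB c) (piB d) := by decide

lemma chain'_flatMap : ∀ l : List (Fin 9), List.IsChain Good l →
    List.IsChain Good (l.flatMap mu)
  | [], _ => by simp
  | [a], _ => by simpa using good_mu a
  | a :: b :: l, h => by
    rw [List.flatMap_cons]
    refine List.isChain_append.2 ⟨good_mu a, chain'_flatMap (b :: l) h.tail, ?_⟩
    intro x hx y hy
    have hb : ((b :: l).flatMap mu).head? = (mu b).head? := by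
      rw [List.flatMap_cons, List.head?_append_of_ne_nil _ (mu_ne_nil b)]
    exact good_boundary a b (List.isChain_cons_cons.1 h).1 x hx y (hb ▸ hy)

lemma len_flatMap : ∀ l : List (Fin 9), l.length ≤ (l.flatMap mu).length := by
  intro l; induction l with
  | nil => simp
  | cons a l ih =>
    rw [List.flatMap_cons, List.length_append, List.length_cons]
    have : 1 ≤ (mu a).length := List.length_pos_iff.2 (mu_ne_nil a)
    omega

lemma take_eq_pref {w : ℕ → Fin 9} (l : List (Fin 9)) (h : PrefixOfSeq l w)
    (n : ℕ) (hn : n ≤ l.length) : l.take n = pref w n := by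
  apply List.ext_get
  · simp [pref, hn]
  · intro i h1 h2
    have h1' : i < n := by
      have := h1; simp only [List.length_take, lt_min_iff] at this; exact this.1
    have hi : i < l.length := lt_of_lt_of_le h1' hn
    have := h i hi
    simp only [List.get_eq_getElem, List.getElem_take, pref, List.getElem_map, List.getElem_range]
    simpa using this

lemma chain_pref (w : ℕ → Fin 9) (hw0 : w 0 = 0) (hfixw : IsFixedPointOf mu w) :
    ∀ n : ℕ, List.IsChain Good (pref w n) := by
  intro n
  induction n using Nat.strong_induction_on with
  | _ n ih =>
    match n with
    | 0 => simp [pref]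
    | 1 => simp [pref, List.range_succ]
    | (m + 2) =>
      have h1 := ih (m + 1) (by omega)
      have h2 := chain'_flatMap _ h1
      have hp : pref w (m + 1) = w 0 :: (List.range m).map (fun i => w (i + 1)) := by
        simp [pref, List.range_succ_eq_map, List.map_map, Function.comp_def]
      have hlen : m + 2 ≤ (applyMorphism mu (pref w (m + 1))).length := by
        rw [applyMorphism, hp, List.flatMap_cons, List.length_append, hw0]
        have := len_flatMap ((List.range m).map (fun i => w (i + 1)))
        simp only [List.length_map, List.length_range] at this
        simp only [mu, List.length_cons]
        omega
      have hfix := hfixw (m + 1)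
      have ht := take_eq_pref _ hfix (m + 2) hlen
      rw [← ht]
      exact List.IsChain.take h2 _

/-- Any two consecutive bricks of `π(w)` join one with another with respect to
`(φ0, φ1)`: for all `n ≥ 0`, `π(w[n])` joins with `π(w[n+1])`. -/
theorem consecutive_bricks_join
    (w : ℕ → Fin 9)
    (hw0 : w 0 = 0) (hfixw : IsFixedPointOf mu w) :
    ∀ n : ℕ, Joins (piB (w n)) (piB (w (n + 1))) := by
  intro n
  have hc := chain_pref w hw0 hfixw (n + 2)
  rw [List.isChain_iff_getElem] at hc
  have hn : n + 1 < (pref w (n + 2)).length := by simp [pref]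
  have := hc n hn
  simp only [pref, List.getElem_map, List.getElem_range] at this
  exact good_joins _ _ this
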